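/- For the terms t̃(n) defined by t̃(0) := 0 and t̃(n+1) := S(SS0 × t̃(n)), the number of subterms of t̃(n) up to equality (subterms-qua-type) is at most 2n + 3. -/
import Mathlib


/-- Terms of the arithmetical language {0, S, +, ×}. -/
inductive ATerm where
  | zero : ATerm
  | succ : ATerm → ATerm
  | add : ATerm → ATerm → ATerm
  | mul : ATerm → ATerm → ATerm
deriving DecidableEq

/-- The set of subterms of a term: the term itself together with the subterms of its
immediate constituents. -/
def ATerm.subterms : ATerm → Finset ATerm
  | .zero => {.zero}
  | .succ t => insert (.succ t) t.subterms
  | .add s t => insert (.add s t) (s.subterms ∪ t.subterms)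
  | .mul s t => insert (.mul s t) (s.subterms ∪ t.subterms)

/-- The terms t̃(0) := 0 and t̃(n+1) := S(SS0 × t̃(n)). -/
def tilde : ℕ → ATerm
  | 0 => .zero
  | n + 1 => .succ (.mul (.succ (.succ .zero)) (tilde n))

lemma sso_subset (n : ℕ) :
    (ATerm.succ (.succ .zero)).subterms ⊆ (tilde (n + 1)).subterms := by
  intro x hx
  exact Finset.mem_insert_of_mem (Finset.mem_insert_of_mem (Finset.mem_union_left _ hx))

/-- The number of subterms-qua-type of t̃(n) is at most 2n + 3. -/
theorem subterms_tilde_card_le (n : ℕ) : (tilde n).subterms.card ≤ 2 * n + 3 := by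
  induction n with
  | zero => decide
  | succ n ih =>
    cases n with
    | zero => decide
    | succ m =>
      have h1 : (tilde (m + 2)).subterms =
          insert (ATerm.succ (.mul (.succ (.succ .zero)) (tilde (m+1))))
            (insert (ATerm.mul (.succ (.succ .zero)) (tilde (m+1)))
              ((ATerm.succ (.succ .zero)).subterms ∪ (tilde (m+1)).subterms)) := rfl
      have hu : (ATerm.succ (.succ .zero)).subterms ∪ (tilde (m+1)).subterms
          = (tilde (m+1)).subterms :=
        Finset.union_eq_right.mpr (sso_subset m)
      rw [h1, hu]
      have h2 := Finset.card_insert_le (ATerm.succ (.mul (.succ (.succ .zero)) (tilde (m+1))))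
        (insert (ATerm.mul (.succ (.succ .zero)) (tilde (m+1))) (tilde (m+1)).subterms)
      have h3 := Finset.card_insert_le (ATerm.mul (.succ (.succ .zero)) (tilde (m+1)))
        (tilde (m+1)).subterms
      omega
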